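/- Suppose x_1, ..., x_K are independent with x_k ~ Poisson(m_k r_2) for constants m_k > 0, r_2 ~ Gamma(r_1, 1/c_0) (shape r_1, rate c_0), and r_1 ~ Gamma(a_0, 1/b_0). Let l, given Σ_k x_k and r_1, be distributed as CRT(Σ_k x_k, r_1). Then the conditional posterior of r_1 given l is Gamma(a_0 + l, 1/(b_0 − log(1−p))) where p = (Σ_k m_k)/(c_0 + Σ_k m_k). -/

import Mathlib

open Finset MeasureTheory

/-- Gamma density with shape `a` and rate `b`. -/
noncomputable def gammaPDF (a b x : ℝ) : ℝ :=
  if 0 < x then b ^ a / Real.Gamma a * x ^ (a - 1) * Real.exp (-(b * x)) else 0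

/-- Negative binomial pmf `NB(r, p)`. -/
noncomputable def nbD (r p : ℝ) (k : ℕ) : ℝ :=
  Real.Gamma (k + r) / ((Nat.factorial k : ℝ) * Real.Gamma r) * p ^ k * (1 - p) ^ r

/-- Unsigned Stirling numbers of the first kind. -/
def stir : ℕ → ℕ → ℕ
  | 0, 0 => 1
  | 0, _ + 1 => 0
  | n + 1, 0 => n * stir n 0
  | n + 1, j + 1 => n * stir n (j + 1) + stir n j

/-- `CRT(n, r)` pmf: `P(l = j) = |s(n,j)| r^j Γ(r)/Γ(n+r)`. -/
noncomputable def crtD (n j : ℕ) (r : ℝ) : ℝ :=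
  (stir n j : ℝ) * r ^ j * Real.Gamma r / Real.Gamma (n + r)

/-- If `x_k | r_2 ~ Poisson(m_k r_2)` independently, `r_2 ~ Gamma(r_1, 1/c_0)`,
`r_1 ~ Gamma(a_0, 1/b_0)`, and `l | Σx, r_1 ~ CRT(Σ_k x_k, r_1)` (so that marginally
`Σ_k x_k ~ NB(r_1, p)` with `p = Σm/(c_0+Σm)`), then
`r_1 | l ~ Gamma(a_0 + l, 1/(b_0 - log(1-p)))`. -/
theorem gamma_crt_posterior (K : ℕ) (a0 b0 c0 : ℝ) (ha0 : 0 < a0) (hb0 : 0 < b0)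
    (hc0 : 0 < c0) (m : Fin K → ℝ) (hm : ∀ k, 0 < m k)
    (p : ℝ) (hp : p = (∑ k, m k) / (c0 + ∑ k, m k))
    (n l : ℕ) (hl : l ≤ n) :
    ∀ x : ℝ, 0 < x →
      gammaPDF a0 b0 x * (nbD x p n * crtD n l x) =
        (∫ t in Set.Ioi (0:ℝ), gammaPDF a0 b0 t * (nbD t p n * crtD n l t)) *
          gammaPDF (a0 + l) (b0 - Real.log (1 - p)) x := by
  have hS : 0 ≤ ∑ k, m k := Finset.sum_nonneg fun k _ => (hm k).le
  have hden : 0 < c0 + ∑ k, m k := by linarith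
  have hp0 : 0 ≤ p := hp ▸ div_nonneg hS hden.le
  have hp1 : p < 1 := by
    rw [hp, div_lt_one hden]; linarith
  have h1p : 0 < 1 - p := by linarith
  set b' : ℝ := b0 - Real.log (1 - p) with hb'def
  have hb' : 0 < b' := by
    have : Real.log (1 - p) ≤ 0 := Real.log_nonpos h1p.le (by linarith)
    simp only [hb'def]; linarith
  set α : ℝ := a0 + l with hαdef
  have hα : 0 < α := by positivity
  set C : ℝ := (stir n l : ℝ) * p ^ n / (Nat.factorial n : ℝ) * (b0 ^ a0 / Real.Gamma a0)
    with hC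
  have key : ∀ x : ℝ, 0 < x →
      gammaPDF a0 b0 x * (nbD x p n * crtD n l x) =
        C * (x ^ (α - 1) * Real.exp (-(b' * x))) := by
    intro x hx
    have hΓx : Real.Gamma x ≠ 0 := (Real.Gamma_pos_of_pos hx).ne'
    have hΓnx : Real.Gamma (n + x) ≠ 0 := (Real.Gamma_pos_of_pos (by positivity)).ne'
    have hrp : (1 - p) ^ x = Real.exp (Real.log (1 - p) * x) :=
      Real.rpow_def_of_pos h1p x
    have hxl : (x : ℝ) ^ l = x ^ (l : ℝ) := (Real.rpow_natCast x l).symm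
    have hfac : (Nat.factorial n : ℝ) ≠ 0 := by positivity
    have hΓa : Real.Gamma a0 ≠ 0 := (Real.Gamma_pos_of_pos ha0).ne'
    have hxadd : x ^ (a0 - 1) * x ^ (l : ℝ) = x ^ (α - 1) := by
      rw [← Real.rpow_add hx, hαdef]; ring_nf
    have hexp : Real.exp (-(b0 * x)) * Real.exp (Real.log (1 - p) * x)
        = Real.exp (-(b' * x)) := by
      rw [← Real.exp_add]; congr 1; simp only [hb'def]; ring
    rw [gammaPDF, if_pos hx, nbD, crtD, hrp, hxl, ← hexp, ← hxadd]
    rw [hC]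
    field_simp
  intro x hx
  rw [key x hx]
  have hint : (∫ t in Set.Ioi (0:ℝ), gammaPDF a0 b0 t * (nbD t p n * crtD n l t))
      = C * ((1 / b') ^ α * Real.Gamma α) := by
    rw [setIntegral_congr_fun measurableSet_Ioi (fun t ht => key t ht),
      integral_const_mul, Real.integral_rpow_mul_exp_neg_mul_Ioi hα hb']
  rw [hint, gammaPDF, if_pos hx]
  have hΓα : Real.Gamma α ≠ 0 := (Real.Gamma_pos_of_pos hα).ne'
  have h1 : ((1:ℝ) / b') ^ α * b' ^ α = 1 := by
    rw [← Real.mul_rpow (by positivity) hb'.le, one_div_mul_cancel hb'.ne',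
      Real.one_rpow]
  have : C * ((1 / b') ^ α * Real.Gamma α) * (b' ^ α / Real.Gamma α * x ^ (α - 1)
      * Real.exp (-(b' * x)))
      = C * (((1 / b') ^ α * b' ^ α) * (Real.Gamma α / Real.Gamma α)
        * (x ^ (α - 1) * Real.exp (-(b' * x)))) := by ring
  rw [this, h1, div_self hΓα]
  ring
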